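/- Let n ≥ 2, p > 1, l ∈ ℕ, and let f : ℝⁿ → R̄ⁿ be any map. If a sequence (x_m) in ℝⁿ ∖ {0} with |x_m| → ∞ is a μ_p-sequence for f with parameter l, then (x_m) is an M_p-sequence for f with parameter l. -/

import Mathlib

open Filter Topology Set
open scoped ENNReal NNReal

noncomputable section

/-- `E n` is the Euclidean space `ℝⁿ`. -/
abbrev E (n : ℕ) := EuclideanSpace ℝ (Fin n)

/-- `RS n` is the one-point compactification `R̄ⁿ = ℝⁿ ∪ {∞}`, with `none` playing
the role of the point `∞`. -/
abbrev RS (n : ℕ) := Option (E n)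

/-- The chordal (spherical) distance `q` on `R̄ⁿ`. -/
noncomputable def chordal {n : ℕ} : RS n → RS n → ℝ
  | some a, some b => ‖a - b‖ / (Real.sqrt (1 + ‖a‖ ^ 2) * Real.sqrt (1 + ‖b‖ ^ 2))
  | some a, none => 1 / Real.sqrt (1 + ‖a‖ ^ 2)
  | none, some b => 1 / Real.sqrt (1 + ‖b‖ ^ 2)
  | none, none => 0

/-- The chordal diameter of a subset of `R̄ⁿ`. -/
noncomputable def qdiam {n : ℕ} (S : Set (RS n)) : ℝ :=
  sSup {d | ∃ a ∈ S, ∃ b ∈ S, d = chordal a b}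

/-- The weighted ball `B_p(a, r) = {x : |x - a| < r |a|^(2-p)}`. -/
def Bp {n : ℕ} (p : ℝ) (a : E n) (r : ℝ) : Set (E n) :=
  {x | ‖x - a‖ < r * ‖a‖ ^ (2 - p)}

/-- `Qq α g x = limsup_{h → 0, h ≠ 0} q(g(x+h), g(x)) / |h|^α ∈ [0,∞]`. -/
noncomputable def Qq {n : ℕ} (α : ℝ) (g : E n → RS n) (x : E n) : ℝ≥0∞ :=
  Filter.limsup (fun h : E n => ENNReal.ofReal (chordal (g (x + h)) (g x) / ‖h‖ ^ α))
    (𝓝[≠] (0 : E n))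

/-- `(x_m)` is an `M_p`-sequence for `f` with parameter `l`:  `x_m ∈ ℝⁿ \ {0}`,
`|x_m| → ∞`, and for every subsequence and every `δ > 0` the set of values
`c ∈ R̄ⁿ` attained only finitely often by `f` in `⋃_k B_p(x_{m_k}, δ)` has at
most `l` elements. -/
def MpSeq {n : ℕ} (p : ℝ) (l : ℕ) (f : E n → RS n) (x : ℕ → E n) : Prop :=
  (∀ m, x m ≠ 0) ∧ Tendsto (fun m => ‖x m‖) atTop atTop ∧
    ∀ φ : ℕ → ℕ, StrictMono φ → ∀ δ : ℝ, 0 < δ →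
      {c : RS n | (f ⁻¹' {c} ∩ ⋃ k, Bp p (x (φ k)) δ).Finite}.Finite ∧
      {c : RS n | (f ⁻¹' {c} ∩ ⋃ k, Bp p (x (φ k)) δ).Finite}.ncard ≤ l

/-- `(x_m)` is a `μ_p`-sequence for `f` with parameter `l`: `x_m ∈ ℝⁿ \ {0}`,
`|x_m| → ∞`, and there are monotone decreasing null sequences `(L_m)`, `(r_m)` of
positive numbers such that `f(B_p(x_m, r_m))` covers `R̄ⁿ` except possibly `l`
sets of chordal diameter at most `L_m`. -/
def MuSeq {n : ℕ} (p : ℝ) (l : ℕ) (f : E n → RS n) (x : ℕ → E n) : Prop :=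
  (∀ m, x m ≠ 0) ∧ Tendsto (fun m => ‖x m‖) atTop atTop ∧
    ∃ L r : ℕ → ℝ, (∀ m, 0 < L m) ∧ (∀ m, 0 < r m) ∧ Antitone L ∧ Antitone r ∧
      Tendsto L atTop (𝓝 0) ∧ Tendsto r atTop (𝓝 0) ∧
      ∀ m, ∃ Es : Fin l → Set (RS n), (∀ j, qdiam (Es j) ≤ L m) ∧
        ∀ c : RS n, c ∉ ⋃ j, Es j → c ∈ f '' Bp p (x m) (r m)

/-- Continuity of `g : ℝⁿ → R̄ⁿ` at a point, with respect to the chordal distance. -/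
def QContinuousAt {n : ℕ} (g : E n → RS n) (x₀ : E n) : Prop :=
  ∀ ε : ℝ, 0 < ε → ∃ δ : ℝ, 0 < δ ∧ ∀ z : E n, ‖z - x₀‖ < δ → chordal (g z) (g x₀) < ε

lemma chordal_le_one {n : ℕ} (a b : RS n) : chordal a b ≤ 1 := by
  have sqrt_ge_one : ∀ c : E n, 1 ≤ Real.sqrt (1 + ‖c‖ ^ 2) := by
    intro c
    have h := Real.sqrt_le_sqrt (show (1:ℝ) ≤ 1 + ‖c‖ ^ 2 by nlinarith [sq_nonneg ‖c‖])
    simpa using h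
  match a, b with
  | none, none => simp [chordal]
  | some a, none =>
    simp only [chordal]
    rw [div_le_one (by positivity)]
    exact sqrt_ge_one a
  | none, some b =>
    simp only [chordal]
    rw [div_le_one (by positivity)]
    exact sqrt_ge_one b
  | some a, some b =>
    simp only [chordal]
    have ha := Real.sq_sqrt (show (0:ℝ) ≤ 1 + ‖a‖ ^ 2 by positivity)
    have hb := Real.sq_sqrt (show (0:ℝ) ≤ 1 + ‖b‖ ^ 2 by positivity)
    have ha1 := sqrt_ge_one a
    have hb1 := sqrt_ge_one b
    rw [div_le_one (by nlinarith)]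
    have h1 : ‖a - b‖ ≤ ‖a‖ + ‖b‖ := norm_sub_le a b
    have h2 : ‖a‖ + ‖b‖ ≤ Real.sqrt (1 + ‖a‖ ^ 2) * Real.sqrt (1 + ‖b‖ ^ 2) := by
      rw [show Real.sqrt (1 + ‖a‖ ^ 2) * Real.sqrt (1 + ‖b‖ ^ 2)
          = Real.sqrt ((1 + ‖a‖ ^ 2) * (1 + ‖b‖ ^ 2)) from (Real.sqrt_mul (by positivity) _).symm,
        show ‖a‖ + ‖b‖ = Real.sqrt ((‖a‖ + ‖b‖) ^ 2) from (Real.sqrt_sq (by positivity)).symm]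
      exact Real.sqrt_le_sqrt (by nlinarith [sq_nonneg (‖a‖ * ‖b‖ - 1), norm_nonneg a, norm_nonneg b])
    linarith

lemma chordal_pos {n : ℕ} {a b : RS n} (hab : a ≠ b) : 0 < chordal a b := by
  match a, b with
  | none, none => exact absurd rfl hab
  | some a, none => simp only [chordal]; positivity
  | none, some b => simp only [chordal]; positivity
  | some a, some b =>
    simp only [chordal]
    have : a ≠ b := fun h => hab (by rw [h])
    have h1 : 0 < ‖a - b‖ := by
      rw [norm_pos_iff]; exact sub_ne_zero_of_ne this
    positivity

lemma le_qdiam {n : ℕ} {S : Set (RS n)} {a b : RS n} (ha : a ∈ S) (hb : b ∈ S) :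
    chordal a b ≤ qdiam S := by
  apply le_csSup
  · exact ⟨1, by rintro d ⟨a', -, b', -, rfl⟩; exact chordal_le_one a' b'⟩
  · exact ⟨a, ha, b, hb, rfl⟩

/-- Every `μ_p`-sequence for `f` with parameter `l` is an `M_p`-sequence
for `f` with parameter `l` (`p > 1`). -/
theorem stmt_7 (n : ℕ) (hn : 2 ≤ n) (p : ℝ) (hp : 1 < p) (l : ℕ)
    (f : E n → RS n) (x : ℕ → E n) (hMu : MuSeq p l f x) :
    MpSeq p l f x := by
  obtain ⟨hx0, hxinf, L, r, hLpos, hrpos, hLanti, hranti, hLlim, hrlim, hcov⟩ := hMu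
  choose Es hEdiam hEcov using hcov
  refine ⟨hx0, hxinf, ?_⟩
  intro φ hφ δ hδ
  set S := {c : RS n | (f ⁻¹' {c} ∩ ⋃ k, Bp p (x (φ k)) δ).Finite} with hSdef
  have hxφ : Tendsto (fun k => ‖x (φ k)‖) atTop atTop := hxinf.comp hφ.tendsto_atTop
  have hrφ : Tendsto (fun k => r (φ k)) atTop (𝓝 0) := hrlim.comp hφ.tendsto_atTop
  have hLφ : Tendsto (fun k => L (φ k)) atTop (𝓝 0) := hLlim.comp hφ.tendsto_atTop
  -- the modified radius tends to infinity
  have hbig : Tendsto (fun k => ‖x (φ k)‖ - r (φ k) * ‖x (φ k)‖ ^ (2 - p)) atTop atTop := by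
    have hpow : Tendsto (fun k => ‖x (φ k)‖ ^ (1 - p)) atTop (𝓝 0) := by
      have := (tendsto_rpow_neg_atTop (show (0:ℝ) < p - 1 by linarith)).comp hxφ
      simpa [Function.comp_def, neg_sub] using this
    have hmul : Tendsto (fun k => 1 - r (φ k) * ‖x (φ k)‖ ^ (1 - p)) atTop (𝓝 1) := by
      have := ((tendsto_const_nhds : Tendsto (fun _ : ℕ => (1:ℝ)) atTop (𝓝 1)).sub
        (hrφ.mul hpow))
      simpa using this
    have hhalf : ∀ᶠ k in atTop, (1:ℝ)/2 ≤ 1 - r (φ k) * ‖x (φ k)‖ ^ (1 - p) :=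
      hmul.eventually (eventually_ge_nhds (by norm_num))
    have hpos : ∀ᶠ k in atTop, (0:ℝ) < ‖x (φ k)‖ := hxφ.eventually_gt_atTop 0
    have h2 : Tendsto (fun k => ‖x (φ k)‖ * (1/2 : ℝ)) atTop atTop :=
      hxφ.atTop_mul_const (by norm_num)
    refine tendsto_atTop_mono' _ ?_ h2
    filter_upwards [hhalf, hpos] with k hk hkpos
    have hrw : ‖x (φ k)‖ * (1 - r (φ k) * ‖x (φ k)‖ ^ (1 - p))
        = ‖x (φ k)‖ - r (φ k) * ‖x (φ k)‖ ^ (2 - p) := by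
      have : ‖x (φ k)‖ * ‖x (φ k)‖ ^ (1 - p) = ‖x (φ k)‖ ^ (2 - p) := by
        rw [show ‖x (φ k)‖ * ‖x (φ k)‖ ^ (1 - p) = ‖x (φ k)‖ ^ (1:ℝ) * ‖x (φ k)‖ ^ (1 - p) by
          rw [Real.rpow_one], ← Real.rpow_add hkpos]
        congr 1
        ring
      rw [mul_sub, mul_one]
      congr 1
      rw [← this]; ring
    calc ‖x (φ k)‖ * (1/2 : ℝ) ≤ ‖x (φ k)‖ * (1 - r (φ k) * ‖x (φ k)‖ ^ (1 - p)) :=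
          mul_le_mul_of_nonneg_left hk hkpos.le
      _ = _ := hrw
  -- claim A: every value of S is eventually in the exceptional sets
  have claimA : ∀ c ∈ S, ∀ᶠ k in atTop, c ∈ ⋃ j, Es (φ k) j := by
    intro c hc
    have hc' : (f ⁻¹' {c} ∩ ⋃ k, Bp p (x (φ k)) δ).Finite := hc
    have hy : ∀ y : E n, ∀ᶠ k in atTop, y ∉ Bp p (x (φ k)) (r (φ k)) := by
      intro y
      filter_upwards [hbig.eventually_gt_atTop ‖y‖] with k hk hmem
      have h1 : ‖x (φ k)‖ - ‖y‖ ≤ ‖y - x (φ k)‖ := by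
        rw [norm_sub_rev]; exact norm_sub_norm_le _ _
      have h2 : ‖y - x (φ k)‖ < r (φ k) * ‖x (φ k)‖ ^ (2 - p) := hmem
      linarith
    have hyall : ∀ᶠ k in atTop, ∀ y ∈ f ⁻¹' {c} ∩ ⋃ k', Bp p (x (φ k')) δ,
        y ∉ Bp p (x (φ k)) (r (φ k)) :=
      (eventually_all_finite hc').2 fun y _ => hy y
    have hrδ : ∀ᶠ k in atTop, r (φ k) ≤ δ :=
      hrφ.eventually (eventually_le_nhds hδ)
    filter_upwards [hyall, hrδ] with k h1 h2
    by_contra hcE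
    obtain ⟨y, hyB, hyf⟩ := hEcov (φ k) c hcE
    have hyδ : y ∈ Bp p (x (φ k)) δ :=
      lt_of_lt_of_le hyB
        (mul_le_mul_of_nonneg_right h2 (Real.rpow_nonneg (norm_nonneg _) _))
    exact h1 y ⟨by simp [hyf], Set.mem_iUnion.2 ⟨k, hyδ⟩⟩ hyB
  -- claim B: no l+1 distinct values in S
  have key : ∀ T : Finset (RS n), ↑T ⊆ S → T.card ≠ l + 1 := by
    intro T hTS hTcard
    set c : Fin (l + 1) → RS n :=
      fun i => (T.equivFin.symm (Fin.cast hTcard.symm i) : RS n) with hcdef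
    have hcinj : Function.Injective c := by
      intro i i' h
      have := T.equivFin.symm.injective (Subtype.coe_injective h)
      exact Fin.cast_injective _ this
    have hcS : ∀ i, c i ∈ S := fun i => hTS (T.equivFin.symm _).2
    have E1 : ∀ᶠ k in atTop, ∀ i, c i ∈ ⋃ j, Es (φ k) j :=
      eventually_all.2 fun i => claimA _ (hcS i)
    have E2 : ∀ᶠ k in atTop, ∀ pr : Fin (l + 1) × Fin (l + 1),
        pr.1 ≠ pr.2 → L (φ k) < chordal (c pr.1) (c pr.2) := by
      refine eventually_all.2 fun pr => ?_
      by_cases hpr : pr.1 = pr.2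
      · exact Eventually.of_forall fun k h => absurd hpr h
      · have hp0 : 0 < chordal (c pr.1) (c pr.2) := chordal_pos fun h => hpr (hcinj h)
        filter_upwards [hLφ.eventually (eventually_lt_nhds hp0)] with k hk _
        exact hk
    obtain ⟨k, h1, h2⟩ := (E1.and E2).exists
    choose j hj using fun i => Set.mem_iUnion.1 (h1 i)
    obtain ⟨i, i', hne, hjeq⟩ := Fintype.exists_ne_map_eq_of_card_lt j (by simp)
    have hle : chordal (c i) (c i') ≤ qdiam (Es (φ k) (j i)) :=
      le_qdiam (hj i) (hjeq ▸ hj i')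
    have := hEdiam (φ k) (j i)
    have := h2 (i, i') hne
    linarith
  have hfin : S.Finite := by
    by_contra hinf
    obtain ⟨T, hT, hTc⟩ := Set.Infinite.exists_subset_card_eq hinf (l + 1)
    exact key T hT hTc
  refine ⟨hfin, ?_⟩
  by_contra hcard
  push_neg at hcard
  obtain ⟨T', hT'S, hT'c⟩ := Set.exists_subset_card_eq (show l + 1 ≤ S.ncard from hcard)
  have hT'fin : T'.Finite := hfin.subset hT'S
  refine key hT'fin.toFinset (by simpa using hT'S) ?_
  rw [← Set.ncard_coe_finset, hT'fin.coe_toFinset, hT'c]
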